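/- Let U : ℝ^d → ℝ be twice continuously differentiable and m-strongly convex with m > 0, let x⋆ be its unique global minimizer, and let π_U be the probability measure on ℝ^d with density proportional to exp(−U(x)). Then ∫_{ℝ^d} ‖x − x⋆‖² dπ_U(x) ≤ d/m. -/

import Mathlib

set_option maxHeartbeats 1600000


open MeasureTheory

lemma aux_growth {E : Type*} [NormedAddCommGroup E] [NormedSpace ℝ E]
    (U : E → ℝ) (hU : ContDiff ℝ 2 U) (m : ℝ)
    (hconv : ∀ x v, m * ‖v‖ ^ 2 ≤ iteratedFDeriv ℝ 2 U x ![v, v])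
    (xstar : E) (hmin : ∀ z, U xstar ≤ U z)
    (u : E) {a b : ℝ} (ha : 0 ≤ a) (hab : a ≤ b) :
    U (xstar + a • u) + m * ‖u‖ ^ 2 * (b ^ 2 - a ^ 2) / 2 ≤ U (xstar + b • u) := by
  have hUd : Differentiable ℝ U := hU.differentiable two_ne_zero
  have hVd : Differentiable ℝ (fderiv ℝ U) :=
    (hU.fderiv_right (m := 1) (by norm_num)).differentiable one_ne_zero
  set c := m * ‖u‖ ^ 2 with hc
  have hγ : ∀ t : ℝ, HasDerivAt (fun t : ℝ => xstar + t • u) u t := by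
    intro t
    simpa using ((hasDerivAt_id t).smul_const u).const_add xstar
  set φ' : ℝ → ℝ := fun t => fderiv ℝ U (xstar + t • u) u with hφ'def
  have hφ : ∀ t : ℝ, HasDerivAt (fun s : ℝ => U (xstar + s • u)) (φ' t) t := by
    intro t
    exact (hUd _).hasFDerivAt.comp_hasDerivAt t (hγ t)
  have hφ' : ∀ t : ℝ, HasDerivAt φ' (fderiv ℝ (fderiv ℝ U) (xstar + t • u) u u) t := by
    intro t
    have h1 : HasDerivAt (fun s : ℝ => fderiv ℝ U (xstar + s • u))
        (fderiv ℝ (fderiv ℝ U) (xstar + t • u) u) t :=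
      (hVd _).hasFDerivAt.comp_hasDerivAt t (hγ t)
    simpa using h1.clm_apply (hasDerivAt_const t u)
  have hcc : ∀ t : ℝ, c ≤ fderiv ℝ (fderiv ℝ U) (xstar + t • u) u u := by
    intro t
    have := hconv (xstar + t • u) u
    rwa [iteratedFDeriv_two_apply] at this
  have hφ'0 : φ' 0 = 0 := by
    have h0 : fderiv ℝ U xstar = 0 :=
      IsLocalMin.fderiv_eq_zero (Filter.Eventually.of_forall hmin)
    simp [hφ'def, h0]
  have hη : Monotone (fun t => φ' t - c * t) := by
    apply monotone_of_deriv_nonneg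
    · exact fun t => ((hφ' t).sub ((hasDerivAt_id t).const_mul c)).differentiableAt
    · intro t
      rw [(show HasDerivAt (fun t => φ' t - c * t) _ t from (hφ' t).sub (show HasDerivAt (fun t => c * t) c t by simpa using (hasDerivAt_id t).const_mul c)).deriv]
      linarith [hcc t]
  have hφ'pos : ∀ t : ℝ, 0 ≤ t → c * t ≤ φ' t := by
    intro t ht
    have := hη ht
    simp only [hφ'0] at this
    linarith
  have hρ : ∀ t : ℝ, HasDerivAt (fun s : ℝ => U (xstar + s • u) - c * s ^ 2 / 2)
      (φ' t - c * t) t := by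
    intro t
    have h2 : HasDerivAt (fun s : ℝ => c * s ^ 2 / 2) (c * t) t := by
      have := ((hasDerivAt_pow 2 t).const_mul c).div_const 2
      simpa using this.congr_deriv (by ring)
    exact (hφ t).sub h2
  have hmono : MonotoneOn (fun s : ℝ => U (xstar + s • u) - c * s ^ 2 / 2) (Set.Ici 0) := by
    apply monotoneOn_of_deriv_nonneg (convex_Ici 0)
    · exact ((hU.continuous.comp (by continuity)).sub (by continuity)).continuousOn
    · exact fun t ht => (hρ t).differentiableAt.differentiableWithinAt
    · intro t ht
      rw [(hρ t).deriv]
      rw [interior_Ici] at ht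
      linarith [hφ'pos t (le_of_lt ht)]
  have := hmono ha (le_trans ha hab) hab
  simp only at this
  linarith

lemma aux_gauss_int (d : ℕ) (b : ℝ) (hb : 0 < b) :
    Integrable (fun u : EuclideanSpace ℝ (Fin d) => Real.exp (-b * ‖u‖ ^ 2)) := by
  have h := (GaussianFourier.integrable_cexp_neg_mul_sq_norm_add
    (V := EuclideanSpace ℝ (Fin d)) (b := (b : ℂ)) (by simpa using hb) 0 0).norm
  apply h.congr
  filter_upwards with u
  rw [Complex.norm_exp]
  norm_num
  left
  rw [← Complex.ofReal_pow, Complex.ofReal_re]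

lemma aux_point (c lam A B : ℝ) (hc : 0 ≤ c) (hlam : 1 ≤ lam)
    (hab : A + c * (lam ^ 2 - 1 ^ 2) / 2 ≤ B) :
    c * (lam - 1) * Real.exp (-B) ≤ Real.exp (-A) - Real.exp (-B) := by
  have hBA : c * (lam - 1) ≤ B - A := by nlinarith [mul_nonneg hc (sq_nonneg (lam - 1))]
  have h1 : (B - A) + 1 ≤ Real.exp (B - A) := Real.add_one_le_exp _
  have h2 : Real.exp (-B) * Real.exp (B - A) = Real.exp (-A) := by
    rw [← Real.exp_add]; ring_nf
  nlinarith [Real.exp_pos (-B), Real.exp_pos (B - A),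
    mul_le_mul_of_nonneg_left h1 (Real.exp_pos (-B)).le,
    mul_le_mul_of_nonneg_left hBA (Real.exp_pos (-B)).le]

noncomputable abbrev Esp (d : ℕ) : Type := EuclideanSpace ℝ (Fin d)

theorem stmt3 (d : ℕ) (hd : 1 ≤ d) (m : ℝ) (hm : 0 < m)
    (U : EuclideanSpace ℝ (Fin d) → ℝ) (hU : ContDiff ℝ 2 U)
    -- `m`-strong convexity: `∇²U(x) ⪰ m I` for all `x`
    (hconv : ∀ x v, m * ‖v‖ ^ 2 ≤ iteratedFDeriv ℝ 2 U x ![v, v])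
    -- `xstar` is the unique global minimizer of `U`
    (xstar : EuclideanSpace ℝ (Fin d))
    (hmin : ∀ z, U xstar ≤ U z)
    (huniq : ∀ z, (∀ y, U z ≤ U y) → z = xstar)
    -- `π` is the probability measure with density proportional to `exp (-U)`
    (Z : ℝ) (hZ : Z = ∫ x, Real.exp (-U x))
    (π : Measure (EuclideanSpace ℝ (Fin d)))
    (hπ : π = volume.withDensity fun x => ENNReal.ofReal (Real.exp (-U x) / Z)) :
    ∫ x, ‖x - xstar‖ ^ 2 ∂π ≤ d / m := by
  have hUc : Continuous U := hU.continuous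
  -- growth bound
  have hgrow : ∀ u : Esp d, U xstar + m * ‖u‖ ^ 2 / 2 ≤ U (xstar + u) := by
    intro u
    have := aux_growth U hU m hconv xstar hmin u (le_refl 0) zero_le_one
    simpa using this
  -- integrability of exp (-U (xstar + u))
  have hg1 : Integrable (fun u : Esp d => Real.exp (-U (xstar + u))) := by
    apply Integrable.mono ((aux_gauss_int d (m / 2) (by positivity)).const_mul
      (Real.exp (-U xstar)))
    · exact ((Real.continuous_exp.comp hUc.neg).comp (by continuity)).aestronglyMeasurable
    · filter_upwards with u
      rw [Real.norm_eq_abs, Real.norm_eq_abs, abs_of_nonneg (Real.exp_pos _).le,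
        abs_of_nonneg (by positivity), ← Real.exp_add]
      apply Real.exp_le_exp.2
      have := hgrow u
      linarith
  -- integrability of ‖u‖^2 * exp (-U (xstar + u))
  have hJint : Integrable (fun u : Esp d => ‖u‖ ^ 2 * Real.exp (-U (xstar + u))) := by
    apply Integrable.mono ((aux_gauss_int d (m / 4) (by positivity)).const_mul
      (4 / m * Real.exp (-U xstar)))
    · exact ((continuous_norm.pow 2).mul
        ((Real.continuous_exp.comp hUc.neg).comp (by continuity))).aestronglyMeasurable
    · filter_upwards with u
      rw [Real.norm_eq_abs, Real.norm_eq_abs, abs_of_nonneg (by positivity),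
        abs_of_nonneg (by positivity)]
      have h1 : Real.exp (-U (xstar + u)) ≤
          Real.exp (-U xstar) * Real.exp (-(m / 2) * ‖u‖ ^ 2) := by
        rw [← Real.exp_add]
        apply Real.exp_le_exp.2
        have := hgrow u
        linarith
      have h2 : ‖u‖ ^ 2 ≤ 4 / m * Real.exp (m / 4 * ‖u‖ ^ 2) := by
        have := Real.add_one_le_exp (m / 4 * ‖u‖ ^ 2)
        have h3 : m / 4 * ‖u‖ ^ 2 ≤ Real.exp (m / 4 * ‖u‖ ^ 2) := by linarith
        calc ‖u‖ ^ 2 = 4 / m * (m / 4 * ‖u‖ ^ 2) := by field_simp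
          _ ≤ 4 / m * Real.exp (m / 4 * ‖u‖ ^ 2) := by
              apply mul_le_mul_of_nonneg_left h3 (by positivity)
      calc ‖u‖ ^ 2 * Real.exp (-U (xstar + u))
          ≤ (4 / m * Real.exp (m / 4 * ‖u‖ ^ 2)) *
            (Real.exp (-U xstar) * Real.exp (-(m / 2) * ‖u‖ ^ 2)) := by
            apply mul_le_mul h2 h1 (Real.exp_pos _).le (by positivity)
        _ = 4 / m * Real.exp (-U xstar) *
            (Real.exp (m / 4 * ‖u‖ ^ 2) * Real.exp (-(m / 2) * ‖u‖ ^ 2)) := by ring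
        _ ≤ 4 / m * Real.exp (-U xstar) * Real.exp (-(m / 4) * ‖u‖ ^ 2) := by
            apply mul_le_mul_of_nonneg_left _ (by positivity)
            rw [← Real.exp_add]
            apply Real.exp_le_exp.2
            nlinarith [sq_nonneg ‖u‖]
  set J := ∫ u : Esp d, ‖u‖ ^ 2 * Real.exp (-U (xstar + u)) with hJdef
  have hJ0 : 0 ≤ J := integral_nonneg fun u => by positivity
  have hZ1 : ∫ u : Esp d, Real.exp (-U (xstar + u)) = Z := by
    rw [hZ]
    exact integral_add_left_eq_self (fun x : Esp d => Real.exp (-U x)) xstar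
  have hZint : Integrable (fun x : Esp d => Real.exp (-U x)) := by
    have hms : AEStronglyMeasurable (fun x : Esp d => Real.exp (-U x)) volume :=
      (Real.continuous_exp.comp hUc.neg).aestronglyMeasurable
    exact ((measurePreserving_add_left volume xstar).integrable_comp hms).1 hg1
  have hZpos : 0 < Z := by
    rw [hZ]
    exact integral_exp_pos (by simpa using hZint)
  -- the key inequality for every l > 1
  have hkey : ∀ l : ℝ, 1 < l →
      m * J ≤ Z * (l ^ 2 * ∑ i ∈ Finset.range d, l ^ i) := by
    intro l hl
    have hl0 : (0 : ℝ) < l := by linarith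
    have hl1 : (0 : ℝ) < l - 1 := by linarith
    have hld : (0 : ℝ) < l ^ d := by positivity
    have hl2 : (0 : ℝ) < l ^ 2 := by positivity
    -- pointwise inequality
    have hpoint : ∀ u : Esp d, m * (l - 1) * (‖u‖ ^ 2 * Real.exp (-U (xstar + l • u))) ≤
        Real.exp (-U (xstar + u)) - Real.exp (-U (xstar + l • u)) := by
      intro u
      have hab := aux_growth U hU m hconv xstar hmin u zero_le_one hl.le
      rw [one_smul] at hab
      have h := aux_point (m * ‖u‖ ^ 2) l (U (xstar + u)) (U (xstar + l • u))
        (by positivity) hl.le hab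
      have e : m * (l - 1) * (‖u‖ ^ 2 * Real.exp (-U (xstar + l • u))) =
          m * ‖u‖ ^ 2 * (l - 1) * Real.exp (-U (xstar + l • u)) := by ring
      rw [e]
      exact h
    -- integrability of both sides
    have hgl : Integrable (fun u : Esp d => Real.exp (-U (xstar + l • u))) :=
      (integrable_comp_smul_iff volume
        (fun v : Esp d => Real.exp (-U (xstar + v))) hl0.ne').2 hg1
    have hIl : Integrable (fun u : Esp d => ‖u‖ ^ 2 * Real.exp (-U (xstar + l • u))) := by
      have h := (integrable_comp_smul_iff volume
        (fun v : Esp d => ‖v‖ ^ 2 * Real.exp (-U (xstar + v))) hl0.ne').2 hJint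
      have h2 := h.const_mul ((l ^ 2)⁻¹)
      apply h2.congr
      filter_upwards with u
      rw [norm_smul, Real.norm_eq_abs, mul_pow, sq_abs]
      field_simp
    -- integrate the pointwise inequality
    have hIneq : ∫ u : Esp d, m * (l - 1) * (‖u‖ ^ 2 * Real.exp (-U (xstar + l • u))) ≤
        ∫ u : Esp d, (Real.exp (-U (xstar + u)) - Real.exp (-U (xstar + l • u))) :=
      integral_mono (hIl.const_mul (m * (l - 1))) (hg1.sub hgl) fun u => hpoint u
    rw [integral_const_mul, integral_sub hg1 hgl] at hIneq
    -- compute the scaled integrals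
    have hZl : ∫ u : Esp d, Real.exp (-U (xstar + l • u)) = (l ^ d)⁻¹ * Z := by
      have h := Measure.integral_comp_smul volume
        (fun v : Esp d => Real.exp (-U (xstar + v))) l
      rw [finrank_euclideanSpace_fin] at h
      simpa [abs_of_pos (inv_pos.2 hld), hZ1, smul_eq_mul] using h
    have hIlval : ∫ u : Esp d, ‖u‖ ^ 2 * Real.exp (-U (xstar + l • u)) =
        (l ^ 2)⁻¹ * ((l ^ d)⁻¹ * J) := by
      have h := Measure.integral_comp_smul volume
        (fun v : Esp d => ‖v‖ ^ 2 * Real.exp (-U (xstar + v))) l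
      rw [finrank_euclideanSpace_fin] at h
      have h2 : ∫ u : Esp d, ‖l • u‖ ^ 2 * Real.exp (-U (xstar + l • u)) =
          l ^ 2 * ∫ u : Esp d, ‖u‖ ^ 2 * Real.exp (-U (xstar + l • u)) := by
        rw [← integral_const_mul]
        congr 1
        ext u
        rw [norm_smul, Real.norm_eq_abs, mul_pow, sq_abs]
        ring
      rw [h2, abs_of_pos (inv_pos.2 hld), smul_eq_mul, ← hJdef] at h
      field_simp at h ⊢
      linarith
    rw [hZl, hIlval, hZ1] at hIneq
    -- rearrange
    set S := ∑ i ∈ Finset.range d, l ^ i with hSdef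
    have hS : S * (l - 1) = l ^ d - 1 := geom_sum_mul l d
    have step2 : m * J * (l - 1) ≤ Z * (l ^ 2 * S) * (l - 1) := by
      have hmul := mul_le_mul_of_nonneg_right hIneq (le_of_lt (mul_pos hl2 hld))
      have e1 : m * (l - 1) * ((l ^ 2)⁻¹ * ((l ^ d)⁻¹ * J)) * (l ^ 2 * l ^ d) =
          m * J * (l - 1) := by field_simp
      have e2 : (Z - (l ^ d)⁻¹ * Z) * (l ^ 2 * l ^ d) = Z * (l ^ 2 * S) * (l - 1) := by
        have : (Z - (l ^ d)⁻¹ * Z) * (l ^ 2 * l ^ d) = Z * l ^ 2 * (l ^ d - 1) := by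
          field_simp
        rw [this, ← hS]; ring
      rw [e1, e2] at hmul
      exact hmul
    exact (mul_le_mul_iff_of_pos_right hl1).1 step2
  -- take the limit l → 1⁺
  have hfin : m * J ≤ Z * d := by
    have hcont : Filter.Tendsto (fun l : ℝ => Z * (l ^ 2 * ∑ i ∈ Finset.range d, l ^ i))
        (nhdsWithin 1 (Set.Ioi 1)) (nhds (Z * ((1 : ℝ) ^ 2 * ∑ i ∈ Finset.range d, (1 : ℝ) ^ i))) := by
      apply Filter.Tendsto.mono_left _ nhdsWithin_le_nhds
      exact Continuous.tendsto (continuous_const.mul ((continuous_pow 2).mul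
        (continuous_finset_sum _ fun i _ => continuous_pow i))) 1
    have hev : ∀ᶠ l in nhdsWithin (1 : ℝ) (Set.Ioi 1),
        m * J ≤ Z * (l ^ 2 * ∑ i ∈ Finset.range d, l ^ i) :=
      eventually_nhdsWithin_of_forall fun l hl => hkey l hl
    have := ge_of_tendsto hcont hev
    simpa using this
  -- final computation
  rw [hπ]
  have hmeas : Measurable fun x : Esp d => (Real.exp (-U x) / Z).toNNReal :=
    (((Real.continuous_exp.comp hUc.neg).div_const Z).measurable).real_toNNReal
  rw [show (fun x : Esp d => ENNReal.ofReal (Real.exp (-U x) / Z)) =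
    (fun x : Esp d => ((fun x : Esp d => (Real.exp (-U x) / Z).toNNReal) x : ENNReal)) from rfl]
  rw [integral_withDensity_eq_integral_smul hmeas]
  have hrw : ∀ x : Esp d, ((Real.exp (-U x) / Z).toNNReal • ‖x - xstar‖ ^ 2 : ℝ) =
      Z⁻¹ * (‖x - xstar‖ ^ 2 * Real.exp (-U x)) := by
    intro x
    rw [NNReal.smul_def, smul_eq_mul, Real.coe_toNNReal _ (by positivity)]
    ring
  simp_rw [hrw]
  rw [integral_const_mul]
  have hJ' : ∫ x : Esp d, ‖x - xstar‖ ^ 2 * Real.exp (-U x) = J := by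
    have h := integral_add_left_eq_self (μ := (volume : Measure (Esp d)))
      (fun x : Esp d => ‖x - xstar‖ ^ 2 * Real.exp (-U x)) xstar
    rw [← h, hJdef]
    congr 1
    ext u
    simp
  rw [hJ', inv_mul_eq_div, div_le_div_iff₀ hZpos hm]
  nlinarith
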